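/- Let (X, T, μ) be an ergodic measure-preserving dynamical system with μ a finite nonatomic measure, and let f : X → [0,∞) be measurable with μ(S_r) > 0 for r > 0, where S_r = {x : f(x) ≤ r}. For l > 0 and r > 0 set C_{l,r} = {x ∈ S_r : τ(x, S_r) > l·μ(S_r)^{−1}}. If there exists l > 0 such that limsup_{r→0} μ(C_{l,r})/μ(S_r) > 0, then for μ-almost every x, liminf_{r→0} log τ(x, S_r)/(−log r) ≤ limsup_{r→0} log μ(S_r)/log r. -/

import Mathlib

open Filter MeasureTheory Set Topology ENNReal

/-- Hitting time of the set `S` for the orbit of `x` under `T`: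
`τ(x,S) = min {n ∈ ℕ⁺ : Tⁿ x ∈ S}`, equal to `⊤` if the orbit never enters `S`. -/
noncomputable def hitTime {X : Type*} (T : X → X) (S : Set X) (x : X) : ℕ∞ :=
  sInf ((fun n : ℕ => (n : ℕ∞)) '' {n : ℕ | 0 < n ∧ T^[n] x ∈ S})

lemma hitTime_le {X : Type*} {T : X → X} {S : Set X} {x : X} {n : ℕ} (hn : 0 < n)
    (h : T^[n] x ∈ S) : hitTime T S x ≤ (n : ℕ∞) :=
  sInf_le ⟨n, ⟨hn, h⟩, rfl⟩

lemma hitTime_spec {X : Type*} {T : X → X} {S : Set X} {x : X} {n : ℕ}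
    (h : hitTime T S x ≤ (n : ℕ∞)) : ∃ m : ℕ, 0 < m ∧ m ≤ n ∧ T^[m] x ∈ S := by
  set A : Set ℕ := {m : ℕ | 0 < m ∧ T^[m] x ∈ S} with hA
  rcases A.eq_empty_or_nonempty with hE | hNe
  · exfalso
    have : hitTime T S x = ⊤ := by
      rw [hitTime, show {n : ℕ | 0 < n ∧ T^[n] x ∈ S} = ∅ from hE]
      simp
    rw [this] at h
    exact (lt_irrefl _ (lt_of_le_of_lt h (WithTop.coe_lt_top n))).elim
  · have hmem : sInf A ∈ A := Nat.sInf_mem hNe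
    refine ⟨sInf A, hmem.1, ?_, hmem.2⟩
    have hlb : ((sInf A : ℕ) : ℕ∞) ≤ hitTime T S x := by
      apply le_sInf
      rintro b ⟨m, hm, rfl⟩
      simp only []
      exact_mod_cast Nat.sInf_le (hA ▸ hm)
    have := hlb.trans h
    exact_mod_cast this

lemma ae_exists_iterate_mem {X : Type*} [MeasurableSpace X] {μ : Measure X} [IsFiniteMeasure μ]
    {T : X → X} (hT : Ergodic T μ) {G : Set X} (hG : MeasurableSet G) (hG0 : μ G ≠ 0) :
    ∀ᵐ x ∂μ, ∃ k : ℕ, T^[k + 1] x ∈ G := by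
  have hTm : Measurable T := hT.toMeasurePreserving.measurable
  set H : Set X := ⋃ k : ℕ, (T^[k + 1]) ⁻¹' G with hH
  have hHm : MeasurableSet H := MeasurableSet.iUnion fun k => (hTm.iterate (k + 1)) hG
  have hsub : T ⁻¹' H ⊆ H := by
    rintro x hx
    simp only [hH, mem_preimage, mem_iUnion] at hx ⊢
    obtain ⟨k, hk⟩ := hx
    exact ⟨k + 1, by rwa [Function.iterate_succ_apply]⟩
  have := hT.ae_empty_or_univ_of_preimage_ae_le hHm.nullMeasurableSet hsub.eventuallyLE
  rcases this with h | h
  · exfalso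
    have h1 : μ (T ⁻¹' G) = μ G := hT.toMeasurePreserving.measure_preimage hG.nullMeasurableSet
    have h2 : T ⁻¹' G ⊆ H := by
      intro x hx
      simp only [hH, mem_iUnion]
      exact ⟨0, by simpa using hx⟩
    have : μ H = 0 := by
      have := ae_eq_empty.mp h
      exact this
    exact hG0 (le_antisymm (by rw [← h1]; exact (measure_mono h2).trans this.le) zero_le)
  · have : ∀ᵐ x ∂μ, x ∈ H := by
      have := ae_eq_univ.mp h
      rw [← compl_compl H] at this ⊢
      · exact ((measure_eq_zero_iff_ae_notMem (s := Hᶜ)).mp (by simpa using this)).mono fun x hx => mem_compl hx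
    filter_upwards [this] with x hx
    simpa only [hH, mem_iUnion, mem_preimage] using hx

section scratch
variable {α β γ : Type*}

lemma limsup_comp' [CompleteLattice γ] (φ : β → γ) (u : α → β) (F : Filter α) :
    Filter.limsup φ (Filter.map u F) = Filter.limsup (φ ∘ u) F := by
  unfold Filter.limsup
  rw [Filter.map_map]

lemma liminf_comp' [CompleteLattice γ] (φ : β → γ) (u : α → β) (F : Filter α) :
    Filter.liminf φ (Filter.map u F) = Filter.liminf (φ ∘ u) F := by
  unfold Filter.liminf
  rw [Filter.map_map]

end scratch


/-- Let `(X,T,μ)` be ergodic with `μ` finite and nonatomic, `S_r = {x : f x ≤ r}` with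
`μ(S_r) > 0`, and `C_{l,r} = {x ∈ S_r : τ(x,S_r) > l·μ(S_r)⁻¹}`. If there is `l > 0` with
`limsup_{r→0} μ(C_{l,r})/μ(S_r) > 0`, then for `μ`-a.e. `x`,
`liminf_{r→0} log τ(x,S_r)/(-log r) ≤ limsup_{r→0} log μ(S_r)/log r`. -/
theorem nontrivial_return_statistics_implies_liminf_le
    {X : Type*} [MeasurableSpace X] (μ : Measure X) [IsFiniteMeasure μ] [NullSingletonClass μ]
    (T : X → X) (hT : Ergodic T μ)
    (f : X → ℝ) (hf : Measurable f) (hf0 : ∀ x, 0 ≤ f x)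
    (hpos : ∀ r : ℝ, 0 < r → 0 < μ {x | f x ≤ r})
    (hl : ∃ l : ℝ, 0 < l ∧
      0 < limsup (fun r : ℝ =>
        (μ {x | x ∈ {y | f y ≤ r} ∧
            ENNReal.ofReal l / μ {y | f y ≤ r} < (hitTime T {y | f y ≤ r} x : ℝ≥0∞)}).toReal
          / (μ {y | f y ≤ r}).toReal) (𝓝[>] 0)) :
    ∀ᵐ x ∂μ,
      liminf (fun r : ℝ =>
          ENNReal.log ((hitTime T {y | f y ≤ r} x : ℝ≥0∞)) / ((- Real.log r : ℝ) : EReal))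
        (𝓝[>] 0)
      ≤ limsup (fun r : ℝ =>
          ENNReal.log (μ {y | f y ≤ r}) / ((Real.log r : ℝ) : EReal)) (𝓝[>] 0) := by
  classical
  obtain ⟨l, hl0, hlim⟩ := hl
  have hTm : Measurable T := hT.toMeasurePreserving.measurable
  have hSm : ∀ r : ℝ, MeasurableSet {y : X | f y ≤ r} := fun r => hf measurableSet_Iic
  have hμfin : ∀ r : ℝ, μ {y : X | f y ≤ r} ≠ ⊤ := fun r => measure_ne_top μ _
  have hev01 : ∀ᶠ r : ℝ in 𝓝[>] (0:ℝ), 0 < r ∧ r < 1 := by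
    filter_upwards [Ioo_mem_nhdsGT (by norm_num : (0:ℝ) < 1)] with r hr
    exact ⟨hr.1, hr.2⟩
  have hneglog : Tendsto (fun r : ℝ => -Real.log r) (𝓝[>] (0:ℝ)) atTop :=
    tendsto_neg_atBot_atTop.comp Real.tendsto_log_nhdsGT_zero
  by_cases hz : μ {y | f y = 0} = 0
  · -- case B : μ {f = 0} = 0
    set S : ℝ → Set X := fun r => {y : X | f y ≤ r} with hS
    set Cf : ℝ → Set X := fun r => {x | x ∈ S r ∧
        ENNReal.ofReal l / μ (S r) < (hitTime T (S r) x : ℝ≥0∞)} with hCf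
    have hμ0 : Tendsto (fun r : ℝ => μ (S r)) (𝓝[>] (0:ℝ)) (𝓝 0) := by
      have hI : ⋂ r > (0:ℝ), S r = {y | f y = 0} := by
        ext y
        simp only [hS, mem_iInter, mem_setOf_eq]
        constructor
        · intro h
          refine le_antisymm ?_ (hf0 y)
          by_contra hc
          push_neg at hc
          have := h (f y / 2) (by linarith)
          linarith
        · intro h r hr
          rw [h]; exact hr.le
      have ht := tendsto_measure_biInter_gt (μ := μ) (s := S) (a := (0:ℝ))
        (fun r _ => (hSm r).nullMeasurableSet)
        (fun i j _ hij y hy => le_trans hy hij) ⟨1, one_pos, hμfin 1⟩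
      rw [hI, hz] at ht
      exact ht
    have hfc : ∃ c : ℝ, 0 < c ∧ ∃ᶠ r in 𝓝[>] (0:ℝ),
        c < (μ (Cf r)).toReal / (μ (S r)).toReal := by
      refine ⟨_, half_pos hlim, frequently_lt_of_lt_limsup ?_ (half_lt_self hlim)⟩
      exact isCoboundedUnder_le_of_le _
        (fun r => div_nonneg ENNReal.toReal_nonneg ENNReal.toReal_nonneg)
    obtain ⟨c, hc0, hfc⟩ := hfc
    have hfreq : ∃ᶠ r in 𝓝[>] (0:ℝ),
        (c < (μ (Cf r)).toReal / (μ (S r)).toReal) ∧ (0 < r ∧ r < 1)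
          ∧ μ (S r) < ENNReal.ofReal (l/2) ∧ μ (S r) < 1 :=
      hfc.and_eventually (hev01.and
        ((hμ0.eventually_lt_const (ENNReal.ofReal_pos.mpr (by linarith))).and
          (hμ0.eventually_lt_const (by norm_num : (0:ℝ≥0∞) < 1))))
    obtain ⟨u, hu, hP⟩ := exists_seq_forall_of_frequently hfreq
    have hu0 : ∀ n, 0 < u n := fun n => (hP n).2.1.1
    have hu1 : ∀ n, u n < 1 := fun n => (hP n).2.1.2
    have hμn0 : ∀ n, μ (S (u n)) ≠ 0 := fun n => (hpos _ (hu0 n)).ne'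
    have hμnt : ∀ n, μ (S (u n)) ≠ ⊤ := fun n => hμfin _
    set a : ℕ → ℝ := fun n => (μ (S (u n))).toReal with ha
    have ha0 : ∀ n, 0 < a n := fun n => ENNReal.toReal_pos (hμn0 n) (hμnt n)
    have ha1 : ∀ n, a n < 1 := by
      intro n
      have h1 := (hP n).2.2.2
      have h2 := (ENNReal.toReal_lt_toReal (hμnt n) ENNReal.one_ne_top).mpr h1
      simpa using h2
    have hal : ∀ n, a n ≤ l/2 := by
      intro n
      have h := (hP n).2.2.1.le
      calc a n ≤ (ENNReal.ofReal (l/2)).toReal :=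
            ENNReal.toReal_mono ENNReal.ofReal_ne_top h
        _ = l/2 := ENNReal.toReal_ofReal (by linarith)
    set K : ℕ → ℕ := fun n => ⌊l / a n⌋₊ with hK
    have hK1 : ∀ n, 1 ≤ K n := by
      intro n
      apply Nat.le_floor
      rw [Nat.cast_one, le_div_iff₀ (ha0 n)]
      nlinarith [hal n, ha0 n]
    have hKle : ∀ n, (K n : ℝ≥0∞) ≤ ENNReal.ofReal l / μ (S (u n)) := by
      intro n
      have h1 : (K n : ℝ) ≤ l / a n := Nat.floor_le (by positivity)
      calc (K n : ℝ≥0∞) = ENNReal.ofReal (K n : ℝ) := (ENNReal.ofReal_natCast _).symm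
        _ ≤ ENNReal.ofReal (l / a n) := ENNReal.ofReal_le_ofReal h1
        _ = ENNReal.ofReal l / ENNReal.ofReal (a n) := ENNReal.ofReal_div_of_pos (ha0 n)
        _ = ENNReal.ofReal l / μ (S (u n)) := by rw [ha, ENNReal.ofReal_toReal (hμnt n)]
    set C' : ℕ → Set X := fun n =>
      S (u n) ∩ ⋂ j ∈ Finset.Icc 1 (K n), (T^[j]) ⁻¹' (S (u n))ᶜ with hC'
    have hC'm : ∀ n, MeasurableSet (C' n) := fun n =>
      (hSm _).inter (MeasurableSet.biInter (Finset.Icc 1 (K n)).countable_toSet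
        fun j _ => (hTm.iterate j) (hSm _).compl)
    have hC'S : ∀ n, C' n ⊆ S (u n) := fun n => inter_subset_left
    have hC'night : ∀ n, ∀ z ∈ C' n, ∀ j, 1 ≤ j → j ≤ K n → T^[j] z ∉ S (u n) := by
      intro n z hz j h1 h2
      have h3 := hz.2
      simp only [mem_iInter, mem_preimage, mem_compl_iff] at h3
      exact h3 j (Finset.mem_Icc.mpr ⟨h1, h2⟩)
    have hCsub : ∀ n, Cf (u n) ⊆ C' n := by
      intro n x hx
      obtain ⟨hx1, hx2⟩ := hx
      refine ⟨hx1, ?_⟩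
      simp only [mem_iInter, mem_preimage, mem_compl_iff]
      intro j hj
      rw [Finset.mem_Icc] at hj
      intro hmem
      have h1 : hitTime T (S (u n)) x ≤ (j : ℕ∞) := hitTime_le (by omega) hmem
      have h2 : ((hitTime T (S (u n)) x : ℝ≥0∞)) ≤ (j : ℝ≥0∞) := by
        rw [← ENat.toENNReal_coe]
        exact ENat.toENNReal_le.mpr h1
      have h3 : (j : ℝ≥0∞) ≤ (K n : ℝ≥0∞) := by exact_mod_cast hj.2
      exact absurd hx2 (not_lt.mpr (h2.trans (h3.trans (hKle n))))
    have hμC' : ∀ n, ENNReal.ofReal (c * a n) ≤ μ (C' n) := by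
      intro n
      have hr := (hP n).1
      have hCfS : Cf (u n) ⊆ S (u n) := fun x hx => hx.1
      have hCft : μ (Cf (u n)) ≠ ⊤ :=
        (lt_of_le_of_lt (measure_mono hCfS) (lt_top_iff_ne_top.mpr (hμnt n))).ne
      have h1 : c * a n < (μ (Cf (u n))).toReal := by
        rw [lt_div_iff₀ (ha0 n)] at hr
        exact hr
      calc ENNReal.ofReal (c * a n) ≤ ENNReal.ofReal ((μ (Cf (u n))).toReal) :=
            ENNReal.ofReal_le_ofReal h1.le
        _ = μ (Cf (u n)) := ENNReal.ofReal_toReal hCft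
        _ ≤ μ (C' n) := measure_mono (hCsub n)
    set D : ℕ → Set X := fun n => ⋃ j ∈ Finset.Icc 1 (K n), (T^[j]) ⁻¹' (C' n) with hD
    have hDm : ∀ n, MeasurableSet (D n) := fun n =>
      MeasurableSet.biUnion (Finset.Icc 1 (K n)).countable_toSet
        fun j _ => (hTm.iterate j) (hC'm n)
    have hμD : ∀ n, ENNReal.ofReal (c * (l/2)) ≤ μ (D n) := by
      intro n
      have key : ∀ i j, i ∈ Finset.Icc 1 (K n) → j ∈ Finset.Icc 1 (K n) → i < j →
          Disjoint ((T^[i]) ⁻¹' (C' n)) ((T^[j]) ⁻¹' (C' n)) := by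
        intro i j hi hj hij
        rw [Set.disjoint_left]
        intro z hzi hzj
        rw [Finset.mem_Icc] at hi hj
        have h1 : T^[i] z ∈ C' n := hzi
        have h2 : T^[j] z ∈ C' n := hzj
        have h3 : T^[j - i] (T^[i] z) = T^[j] z := by
          rw [← Function.iterate_add_apply, Nat.sub_add_cancel hij.le]
        exact hC'night n _ h1 (j - i) (by omega) (by omega) (by rw [h3]; exact hC'S n h2)
      have hdisj : (↑(Finset.Icc 1 (K n)) : Set ℕ).PairwiseDisjoint
          (fun j => (T^[j]) ⁻¹' (C' n)) := by
        intro i hi j hj hij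
        rcases lt_or_gt_of_ne hij with h | h
        · exact key i j (by exact_mod_cast hi) (by exact_mod_cast hj) h
        · exact (key j i (by exact_mod_cast hj) (by exact_mod_cast hi) h).symm
      have hmp : ∀ j : ℕ, μ ((T^[j]) ⁻¹' (C' n)) = μ (C' n) := fun j =>
        (hT.toMeasurePreserving.iterate j).measure_preimage (hC'm n).nullMeasurableSet
      have hsum : μ (D n) = (K n : ℝ≥0∞) * μ (C' n) := by
        rw [hD]
        rw [measure_biUnion_finset hdisj (fun j _ => (hTm.iterate j) (hC'm n))]
        simp only [hmp]
        rw [Finset.sum_const, Nat.card_Icc]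
        simp [smul_eq_mul]
      rw [hsum]
      have hKn : l / a n - 1 < (K n : ℝ) := Nat.sub_one_lt_floor _
      have e1 : (l / a n) * a n = l := div_mul_cancel₀ _ (ha0 n).ne'
      have e2 : (l / a n - 1) * a n ≤ (K n : ℝ) * a n :=
        mul_le_mul_of_nonneg_right hKn.le (ha0 n).le
      have e3 : (l / a n - 1) * a n = l - a n := by rw [sub_mul, e1, one_mul]
      have h1 : c * (l/2) ≤ (K n : ℝ) * (c * a n) := by nlinarith [hal n, ha0 n, hc0.le]
      calc ENNReal.ofReal (c * (l/2)) ≤ ENNReal.ofReal ((K n : ℝ) * (c * a n)) :=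
            ENNReal.ofReal_le_ofReal h1
        _ = ENNReal.ofReal (K n : ℝ) * ENNReal.ofReal (c * a n) :=
            ENNReal.ofReal_mul (by positivity)
        _ = (K n : ℝ≥0∞) * ENNReal.ofReal (c * a n) := by rw [ENNReal.ofReal_natCast]
        _ ≤ (K n : ℝ≥0∞) * μ (C' n) := mul_le_mul_right (hμC' n) _
    set G : Set X := ⋂ N : ℕ, ⋃ n : ℕ, ⋃ (_ : N ≤ n), D n with hG
    have hGm : MeasurableSet G :=
      MeasurableSet.iInter fun N =>
        MeasurableSet.iUnion fun n => MeasurableSet.iUnion fun _ => hDm n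
    have hμG : ENNReal.ofReal (c * (l/2)) ≤ μ G := by
      have hanti : Antitone (fun N : ℕ => ⋃ n : ℕ, ⋃ (_ : N ≤ n), D n) := by
        intro N M hNM
        exact iUnion₂_subset fun n hn => subset_iUnion₂ (s := fun n _ => D n) n (hNM.trans hn)
      have ht := tendsto_measure_iInter_atTop (μ := μ)
        (fun N => (MeasurableSet.iUnion fun n =>
          MeasurableSet.iUnion fun _ => hDm n).nullMeasurableSet)
        hanti ⟨0, measure_ne_top μ _⟩
      refine ge_of_tendsto ht (Eventually.of_forall fun N => ?_)
      calc ENNReal.ofReal (c*(l/2)) ≤ μ (D N) := hμD N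
        _ ≤ μ (⋃ n, ⋃ (_ : N ≤ n), D n) :=
            measure_mono (subset_iUnion₂ (s := fun n _ => D n) N le_rfl)
    have hμG0 : μ G ≠ 0 := by
      have := lt_of_lt_of_le (ENNReal.ofReal_pos.mpr (by positivity : (0:ℝ) < c * (l/2))) hμG
      exact this.ne'
    have hae := ae_exists_iterate_mem hT hGm hμG0
    filter_upwards [hae] with x hx
    obtain ⟨k₀, hkG⟩ := hx
    set k : ℕ := k₀ + 1 with hkdef
    set M : ℝ := l * ((k:ℝ) + 1) with hM
    have hM1 : 0 < M := by positivity
    have hfD : ∃ᶠ n in atTop, T^[k] x ∈ D n := by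
      rw [frequently_atTop]
      intro N
      have h1 := mem_iInter.mp hkG N
      simp only [mem_iUnion] at h1
      obtain ⟨n, hn, hmem⟩ := h1
      exact ⟨n, hn, hmem⟩
    have hhit : ∀ n, T^[k] x ∈ D n →
        ((hitTime T (S (u n)) x : ℝ≥0∞)) ≤ ENNReal.ofReal M / μ (S (u n)) := by
      intro n hn
      simp only [hD, mem_iUnion, mem_preimage] at hn
      obtain ⟨j, hj, hjmem⟩ := hn
      rw [Finset.mem_Icc] at hj
      have h1 : T^[j + k] x ∈ S (u n) := by
        rw [Function.iterate_add_apply]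
        exact hC'S n hjmem
      have h2 : hitTime T (S (u n)) x ≤ ((j + k : ℕ) : ℕ∞) := hitTime_le (by omega) h1
      have h3 : ((hitTime T (S (u n)) x : ℝ≥0∞)) ≤ ((j + k : ℕ) : ℝ≥0∞) := by
        rw [← ENat.toENNReal_coe]; exact ENat.toENNReal_le.mpr h2
      have h4 : (j + k : ℕ) ≤ K n * (k + 1) := by
        have h5 : k ≤ K n * k := Nat.le_mul_of_pos_left k (hK1 n)
        have h6 : j + k ≤ K n + K n * k := Nat.add_le_add hj.2 h5
        have h7 : K n + K n * k = K n * (k + 1) := by ring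
        omega
      calc ((hitTime T (S (u n)) x : ℝ≥0∞)) ≤ ((j + k : ℕ) : ℝ≥0∞) := h3
        _ ≤ ((K n * (k+1) : ℕ) : ℝ≥0∞) := by exact_mod_cast h4
        _ = (K n : ℝ≥0∞) * ((k+1 : ℕ) : ℝ≥0∞) := by push_cast; ring
        _ ≤ (ENNReal.ofReal l / μ (S (u n))) * ((k+1:ℕ) : ℝ≥0∞) :=
            mul_le_mul_left (hKle n) _
        _ = ENNReal.ofReal M / μ (S (u n)) := by
            rw [div_eq_mul_inv, div_eq_mul_inv, mul_right_comm]
            congr 1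
            rw [hM, ENNReal.ofReal_mul hl0.le, ← ENNReal.ofReal_natCast (k+1)]
            norm_num
    set q : ℕ → ℝ := fun n => Real.log (a n) / Real.log (u n) with hq
    set p : ℕ → ℝ := fun n => Real.log M / (-Real.log (u n)) with hp
    set v : ℕ → EReal := fun n =>
      ENNReal.log (ENNReal.ofReal M / μ (S (u n))) / ((-Real.log (u n) : ℝ) : EReal) with hv
    have hlogun : ∀ n, Real.log (u n) < 0 := fun n => Real.log_neg (hu0 n) (hu1 n)
    have hvn : ∀ n, v n = (((p n + q n : ℝ)) : EReal) := by
      intro n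
      have htoReal : (ENNReal.ofReal M / μ (S (u n))).toReal = M / a n := by
        rw [ENNReal.toReal_div, ENNReal.toReal_ofReal hM1.le, ha]
      have hpos' : 0 < (ENNReal.ofReal M / μ (S (u n))).toReal := by
        rw [htoReal]; exact div_pos hM1 (ha0 n)
      rw [hv]
      simp only []
      rw [ENNReal.log_pos_real' hpos', htoReal, Real.log_div hM1.ne' (ha0 n).ne',
        ← EReal.coe_div]
      congr 1
      have hun : Real.log (u n) ≠ 0 := (hlogun n).ne
      have hq' : q n = (-Real.log (a n)) / (-Real.log (u n)) := by
        rw [hq]; simp only []; rw [neg_div_neg_eq]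
      have hp' : p n = Real.log M / (-Real.log (u n)) := by rw [hp]
      rw [hp', hq', ← add_div, sub_eq_add_neg]
    have hgv : ∃ᶠ n in atTop, ((fun r : ℝ =>
        ENNReal.log ((hitTime T (S r) x : ℝ≥0∞)) / ((- Real.log r : ℝ) : EReal)) ∘ u) n
          ≤ v n := by
      apply hfD.mono
      intro n hn
      apply EReal.div_le_div_right_of_nonneg
      · have h1 : (0:ℝ) ≤ -Real.log (u n) := by linarith [hlogun n]
        exact_mod_cast EReal.coe_le_coe_iff.mpr h1
      · exact ENNReal.log_monotone (hhit n hn)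
    have hp0 : Tendsto p atTop (𝓝 0) := by
      have h1 : Tendsto (fun n => -Real.log (u n)) atTop atTop :=
        hneglog.comp hu
      simpa [hp] using h1.const_div_atTop (Real.log M)
    have hq0 : ∀ n, (0:ℝ) ≤ q n := by
      intro n
      rw [hq]
      exact div_nonneg_of_nonpos (Real.log_nonpos (ha0 n).le (ha1 n).le) (hlogun n).le
    have hqcoe : (fun n => ((q n : ℝ) : EReal)) = (fun r : ℝ =>
        ENNReal.log (μ (S r)) / ((Real.log r : ℝ) : EReal)) ∘ u := by
      funext n
      have har : 0 < (μ (S (u n))).toReal := ha0 n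
      simp only [Function.comp_apply]
      rw [ENNReal.log_pos_real' har, ← EReal.coe_div]
    have hqRHS : limsup (fun n => ((q n : ℝ) : EReal)) atTop ≤ limsup (fun r : ℝ =>
        ENNReal.log (μ (S r)) / ((Real.log r : ℝ) : EReal)) (𝓝[>] (0:ℝ)) := by
      rw [hqcoe, ← limsup_comp']
      exact limsup_le_limsup_of_le hu
    have hq_nonneg : (0:EReal) ≤ limsup (fun n => ((q n : ℝ) : EReal)) atTop := by
      refine le_trans ?_ (liminf_le_limsup (f := atTop))
      exact le_liminf_of_le (by isBoundedDefault)
        (Eventually.of_forall fun n => EReal.coe_nonneg.mpr (hq0 n))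
    have hRHS0 : (0:EReal) ≤ limsup (fun r : ℝ =>
        ENNReal.log (μ (S r)) / ((Real.log r : ℝ) : EReal)) (𝓝[>] (0:ℝ)) :=
      le_trans hq_nonneg hqRHS
    have hstep1 : liminf (fun r : ℝ =>
          ENNReal.log ((hitTime T (S r) x : ℝ≥0∞)) / ((- Real.log r : ℝ) : EReal)) (𝓝[>] (0:ℝ))
        ≤ liminf ((fun r : ℝ =>
          ENNReal.log ((hitTime T (S r) x : ℝ≥0∞)) / ((- Real.log r : ℝ) : EReal)) ∘ u)
            atTop := by
      rw [← liminf_comp']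
      exact liminf_le_liminf_of_le hu
    refine le_trans hstep1 ?_
    apply le_of_forall_gt_imp_ge_of_dense
    intro b hb
    refine liminf_le_of_frequently_le ?_ (by isBoundedDefault)
    rcases eq_or_ne b ⊤ with rfl | hbt
    · exact Eventually.frequently (Eventually.of_forall fun n => le_top)
    have hqb : limsup (fun n => ((q n : ℝ) : EReal)) atTop < b := lt_of_le_of_lt hqRHS hb
    obtain ⟨b', hb'1, hb'2⟩ := exists_between hqb
    have hb'bot : b' ≠ ⊥ := by
      intro h
      rw [h] at hb'1
      exact absurd (lt_of_le_of_lt hq_nonneg hb'1) (by simp)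
    have hb'top : b' ≠ ⊤ := (hb'2.trans_le le_top).ne
    have hbbot : b ≠ ⊥ := by
      intro h
      rw [h] at hb
      exact absurd (lt_of_le_of_lt hRHS0 hb) (by simp)
    set c' : ℝ := b'.toReal with hc'
    set rb : ℝ := b.toReal with hrb
    have hb'eq : (c' : EReal) = b' := EReal.coe_toReal hb'top hb'bot
    have hbeq : (rb : EReal) = b := EReal.coe_toReal hbt hbbot
    have hc'rb : c' < rb := by
      rw [← EReal.coe_lt_coe_iff, hb'eq, hbeq]
      exact hb'2
    have hev1 : ∀ᶠ n in atTop, q n < c' := by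
      have h1 := eventually_lt_of_limsup_lt hb'1
      apply h1.mono
      intro n hn
      rw [← hb'eq, EReal.coe_lt_coe_iff] at hn
      exact hn
    have hev2 : ∀ᶠ n in atTop, p n < rb - c' :=
      hp0.eventually_lt_const (by linarith)
    apply ((hgv.and_eventually (hev1.and hev2)).mono)
    rintro n ⟨h1, h2, h3⟩
    refine h1.trans ?_
    rw [hvn n, ← hbeq, EReal.coe_le_coe_iff]
    linarith
  · -- case A : μ {f = 0} > 0
    have hZ : MeasurableSet {y : X | f y = 0} := hf (measurableSet_singleton 0)
    have hae := ae_exists_iterate_mem hT hZ hz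
    -- RHS is nonnegative
    set L1 : ℝ := Real.log (μ (univ : Set X)).toReal with hL1
    have hwt : Tendsto (fun r : ℝ => L1 / Real.log r) (𝓝[>] (0:ℝ)) (𝓝 0) := by
      have h2 := hneglog.const_div_atTop L1
      have h3 := h2.neg
      rw [neg_zero] at h3
      refine h3.congr fun r => ?_
      rw [div_neg, neg_neg]
    have hRHS0 : (0 : EReal) ≤ limsup (fun r : ℝ =>
        ENNReal.log (μ {y | f y ≤ r}) / ((Real.log r : ℝ) : EReal)) (𝓝[>] (0:ℝ)) := by
      have hlb : ∀ᶠ r : ℝ in 𝓝[>] (0:ℝ),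
          ((L1 / Real.log r : ℝ) : EReal)
            ≤ ENNReal.log (μ {y | f y ≤ r}) / ((Real.log r : ℝ) : EReal) := by
        filter_upwards [hev01] with r hr
        have hμr0 : μ {y | f y ≤ r} ≠ 0 := (hpos r hr.1).ne'
        have hlogr : Real.log r < 0 := Real.log_neg hr.1 hr.2
        have har : (0:ℝ) < (μ {y | f y ≤ r}).toReal := ENNReal.toReal_pos hμr0 (hμfin r)
        rw [ENNReal.log_pos_real' har, ← EReal.coe_div, EReal.coe_le_coe_iff]
        apply div_le_div_of_nonpos_of_le hlogr.le
        exact Real.log_le_log har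
          (ENNReal.toReal_mono (measure_ne_top μ _) (measure_mono (subset_univ _)))
      have h0 : (0 : EReal)
          = liminf (fun r : ℝ => ((L1 / Real.log r : ℝ) : EReal)) (𝓝[>] (0:ℝ)) := by
        symm
        apply Tendsto.liminf_eq
        have := (continuous_coe_real_ereal.tendsto 0).comp hwt
        simpa [Function.comp_def] using this
      calc (0 : EReal) = _ := h0
        _ ≤ liminf (fun r : ℝ =>
            ENNReal.log (μ {y | f y ≤ r}) / ((Real.log r : ℝ) : EReal)) (𝓝[>] (0:ℝ)) :=
          liminf_le_liminf hlb
        _ ≤ _ := liminf_le_limsup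
    filter_upwards [hae] with x hx
    obtain ⟨k, hk⟩ := hx
    have hbound : ∀ᶠ r : ℝ in 𝓝[>] (0:ℝ),
        ENNReal.log ((hitTime T {y | f y ≤ r} x : ℝ≥0∞)) / ((- Real.log r : ℝ) : EReal)
          ≤ ((Real.log ((k:ℝ)+2) / (-Real.log r) : ℝ) : EReal) := by
      filter_upwards [hev01] with r hr
      have hmem : T^[k+1] x ∈ {y : X | f y ≤ r} := by
        have hk' : f (T^[k+1] x) = 0 := hk
        simp only [Set.mem_setOf_eq, hk']
        exact hr.1.le
      have h1 : hitTime T {y | f y ≤ r} x ≤ ((k+1 : ℕ) : ℕ∞) :=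
        hitTime_le (Nat.succ_pos k) hmem
      have h2 : ((hitTime T {y | f y ≤ r} x : ℝ≥0∞)) ≤ ((k+1 : ℕ) : ℝ≥0∞) := by
        rw [← ENat.toENNReal_coe]
        exact ENat.toENNReal_le.mpr h1
      have h3 : ENNReal.log ((hitTime T {y | f y ≤ r} x : ℝ≥0∞))
          ≤ ((Real.log ((k:ℝ)+2) : ℝ) : EReal) := by
        calc ENNReal.log ((hitTime T {y | f y ≤ r} x : ℝ≥0∞))
            ≤ ENNReal.log ((k+1 : ℕ) : ℝ≥0∞) := ENNReal.log_monotone h2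
          _ ≤ ((Real.log ((k:ℝ)+2) : ℝ) : EReal) := by
            have he : ((k+1 : ℕ) : ℝ≥0∞) = ENNReal.ofReal ((k:ℝ)+1) := by
              rw [← ENNReal.ofReal_natCast]
              norm_num
            rw [he, ENNReal.log_ofReal_of_pos (by positivity)]
            apply EReal.coe_le_coe_iff.mpr
            apply Real.log_le_log (by positivity)
            linarith
      calc ENNReal.log ((hitTime T {y | f y ≤ r} x : ℝ≥0∞)) / ((- Real.log r : ℝ) : EReal)
          ≤ ((Real.log ((k:ℝ)+2) : ℝ) : EReal) / ((- Real.log r : ℝ) : EReal) := by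
            apply EReal.div_le_div_right_of_nonneg _ h3
            have : (0:ℝ) ≤ -Real.log r := by
              have := Real.log_neg hr.1 hr.2; linarith
            exact_mod_cast EReal.coe_le_coe_iff.mpr this
        _ = ((Real.log ((k:ℝ)+2) / (-Real.log r) : ℝ) : EReal) := (EReal.coe_div _ _).symm
    have hub : Tendsto (fun r : ℝ => ((Real.log ((k:ℝ)+2) / (-Real.log r) : ℝ) : EReal))
        (𝓝[>] (0:ℝ)) (𝓝 0) := by
      have := (continuous_coe_real_ereal.tendsto 0).comp
        (hneglog.const_div_atTop (Real.log ((k:ℝ)+2)))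
      simpa [Function.comp_def] using this
    calc liminf (fun r : ℝ =>
          ENNReal.log ((hitTime T {y | f y ≤ r} x : ℝ≥0∞)) / ((- Real.log r : ℝ) : EReal))
          (𝓝[>] (0:ℝ))
        ≤ liminf (fun r : ℝ => ((Real.log ((k:ℝ)+2) / (-Real.log r) : ℝ) : EReal))
          (𝓝[>] (0:ℝ)) := liminf_le_liminf hbound
      _ = 0 := hub.liminf_eq
      _ ≤ _ := hRHS0
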